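/- For all nonnegative integers n and k, the Bell numbers satisfy the identity Σ_{j=0}^n C(n,j) · k^{n−j} · B_j = Σ_{m=0}^k s(k,m) · B_{n+m}, where C(n,j) are binomial coefficients, s(k,m) are the signed Stirling numbers of the first kind, and B_j are the Bell numbers. -/

import Mathlib

open Finset Polynomial

/-- Exponential generating function of a sequence. -/
noncomputable def egf {R : Type*} [CommRing R] [Algebra ℚ R] (a : ℕ → R) : PowerSeries R :=
  PowerSeries.mk fun n => ((n.factorial : ℚ)⁻¹) • a n

/-- Formal composition of power series (the correct composition when the inner
series `h` has zero constant term, since then `h ^ n` has order at least `n`). -/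
noncomputable def psComp {R : Type*} [CommRing R] (g h : PowerSeries R) : PowerSeries R :=
  PowerSeries.mk fun m =>
    ∑ n ∈ Finset.range (m + 1), (PowerSeries.coeff n g) * (PowerSeries.coeff m (h ^ n))

/-- Partial Bell polynomials of a sequence `a` (with `a 0 = 1`):
`B_{n,k} = (n!/k!) · [t^n] (f(t) - 1)^k` where `f` is the e.g.f. of `a`. -/
noncomputable def bellPartial {R : Type*} [CommRing R] [Algebra ℚ R] (a : ℕ → R) (n k : ℕ) : R :=
  ((n.factorial : ℚ) / (k.factorial : ℚ)) • (PowerSeries.coeff n ((egf a - 1) ^ k))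

/-- Stirling numbers of the second kind. -/
def stirling2 : ℕ → ℕ → ℕ
  | 0, 0 => 1
  | 0, _ + 1 => 0
  | _ + 1, 0 => 0
  | n + 1, k + 1 => (k + 1) * stirling2 n (k + 1) + stirling2 n k

/-- Bell numbers. -/
def bellNum (n : ℕ) : ℕ := ∑ k ∈ Finset.range (n + 1), stirling2 n k

/-- Signed Stirling numbers of the first kind, defined as the coefficients of the
falling factorial `x (x-1) ⋯ (x-n+1) = Σ_k s(n,k) x^k`. -/
noncomputable def stirling1 (n k : ℕ) : ℚ := (descPochhammer ℚ n).coeff k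


lemma stirling2_eq_zero : ∀ n k, n < k → stirling2 n k = 0
  | 0, 0, h => absurd h (lt_irrefl 0)
  | 0, k + 1, _ => rfl
  | n + 1, 0, h => absurd h (Nat.not_lt_zero _).elim
  | n + 1, k + 1, h => by
    have h1 : n < k + 1 := Nat.lt_of_succ_lt_succ (Nat.lt_succ_of_lt h)
    have h2 : n < k := Nat.lt_of_succ_lt_succ h
    simp [stirling2, stirling2_eq_zero n (k+1) h1, stirling2_eq_zero n k h2]

lemma stirling2_succ_sum : ∀ n k, stirling2 (n+1) (k+1)
    = ∑ j ∈ Finset.range (n+1), n.choose j * stirling2 j k := by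
  intro n
  induction n with
  | zero => intro k; cases k <;> simp [stirling2]
  | succ n ih =>
    intro k
    have step : stirling2 (n+2) (k+1) = (k+1) * stirling2 (n+1) (k+1) + stirling2 (n+1) k := rfl
    have expand : ∑ j ∈ Finset.range (n+2), (n+1).choose j * stirling2 j k
        = (∑ j ∈ Finset.range (n+1), n.choose j * stirling2 (j+1) k)
          + ∑ j ∈ Finset.range (n+1), n.choose j * stirling2 j k := by
      rw [Finset.sum_range_succ']
      simp only [Nat.choose_succ_succ', add_mul, Finset.sum_add_distrib]
      have h2 : ∑ j ∈ Finset.range (n+1), n.choose (j+1) * stirling2 (j+1) k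
          + (n+1).choose 0 * stirling2 0 k
          = ∑ j ∈ Finset.range (n+1), n.choose j * stirling2 j k := by
        have e := Finset.sum_range_succ' (fun j => n.choose j * stirling2 j k) (n+1)
        simp only [Nat.choose_zero_right, one_mul] at e ⊢
        rw [← e, Finset.sum_range_succ, Nat.choose_succ_self, zero_mul, add_zero]
      omega
    rw [step, expand]
    cases k with
    | zero =>
      have hz : ∀ j, stirling2 (j+1) 0 = 0 := fun j => rfl
      simp only [hz, mul_zero, Finset.sum_const_zero, zero_add]
      have b0 : stirling2 (n+1) 0 = 0 := rfl
      simpa using ih 0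
    | succ k =>
      rw [ih (k+1), ih k]
      have hs : ∀ j, stirling2 (j+1) (k+1) = (k+1) * stirling2 j (k+1) + stirling2 j k :=
        fun j => rfl
      have hR : ∑ j ∈ Finset.range (n+1), n.choose j * stirling2 (j+1) (k+1)
          = (k+1) * (∑ j ∈ Finset.range (n+1), n.choose j * stirling2 j (k+1))
            + ∑ j ∈ Finset.range (n+1), n.choose j * stirling2 j k := by
        rw [Finset.mul_sum, ← Finset.sum_add_distrib]
        exact Finset.sum_congr rfl fun j _ => by rw [hs]; ring
      rw [hR]
      ring

lemma bellNum_succ (n : ℕ) : bellNum (n+1) = ∑ j ∈ Finset.range (n+1), n.choose j * bellNum j := by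
  have h0 : stirling2 (n+1) 0 = 0 := rfl
  rw [bellNum, Finset.sum_range_succ', h0, add_zero]
  simp only [stirling2_succ_sum]
  rw [Finset.sum_comm]
  refine Finset.sum_congr rfl fun j hj => ?_
  rw [← Finset.mul_sum, bellNum]
  congr 1
  refine (Finset.sum_subset ?_ ?_).symm
  · exact Finset.range_subset_range.2 (Nat.succ_le_succ (Nat.le_of_lt_succ (Finset.mem_range.1 hj)))
  · intro x hx hnx
    exact stirling2_eq_zero j x (Nat.lt_of_succ_le (Nat.le_of_not_lt (fun h => hnx (Finset.mem_range.2 h))))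

noncomputable def bellL : ℚ[X] →ₗ[ℚ] ℚ where
  toFun p := p.sum fun n a => a * (bellNum n : ℚ)
  map_add' p q := Polynomial.sum_add_index p q _ (fun n => zero_mul _) (fun n a b => add_mul a b _)
  map_smul' c p := by
    rw [Polynomial.sum_smul_index p c (fun n a => a * (bellNum n : ℚ)) (fun n => zero_mul _)]
    simp [Polynomial.sum, Finset.mul_sum, mul_assoc]

lemma bellL_X_pow (n : ℕ) : bellL (X ^ n) = (bellNum n : ℚ) := by
  rw [X_pow_eq_monomial]
  show (monomial n (1:ℚ)).sum (fun n a => a * (bellNum n : ℚ)) = _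
  rw [Polynomial.sum_monomial_index (1:ℚ) (fun n a => a * (bellNum n : ℚ)) (zero_mul _), one_mul]

lemma add_one_pow (n : ℕ) : ((X + 1 : ℚ[X]))^n = ∑ j ∈ Finset.range (n+1), (n.choose j : ℚ) • X^j := by
  rw [add_pow]
  refine Finset.sum_congr rfl fun j _ => ?_
  rw [one_pow, mul_one, smul_eq_C_mul, C_eq_natCast, mul_comm]

lemma bellL_X_mul (p : ℚ[X]) : bellL (X * p) = bellL (p.comp (X + 1)) := by
  induction p using Polynomial.induction_on' with
  | add p q hp hq => simp only [mul_add, add_comp, map_add, hp, hq]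
  | monomial n a =>
    rw [X_mul_monomial, monomial_comp, ← smul_eq_C_mul, map_smul, add_one_pow, map_sum,
      ← C_mul_X_pow_eq_monomial, ← smul_eq_C_mul, map_smul, bellL_X_pow]
    simp only [map_smul, bellL_X_pow, smul_eq_mul]
    congr 1
    rw [bellNum_succ n]
    push_cast
    rfl

lemma bellL_comp (k : ℕ) : ∀ p : ℚ[X],
    bellL (p.comp (X + (k : ℚ[X]))) = bellL (descPochhammer ℚ k * p) := by
  induction k with
  | zero => intro p; simp [descPochhammer]
  | succ k ih =>
    intro p
    rw [descPochhammer_succ_right, mul_assoc, ← ih ((X - (k:ℚ[X])) * p)]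
    have h1 : ((X - (k:ℚ[X])) * p).comp (X + (k:ℚ[X])) = X * p.comp (X + (k:ℚ[X])) := by
      rw [mul_comp, sub_comp, X_comp, natCast_comp]; ring
    rw [h1, bellL_X_mul (p.comp (X + (k:ℚ[X]))), comp_assoc]
    congr 2
    rw [add_comp, X_comp, natCast_comp]
    push_cast
    ring


/-- The umbral relation `(β + k.u)^n ≃ (β)_k β^n ≃ β^n` for the Bell umbra:
`Σ_{j=0}^n C(n,j) k^{n−j} B_j = Σ_{m=0}^k s(k,m) B_{n+m}`. -/
theorem bell_shift_identity (n k : ℕ) :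
    ∑ j ∈ Finset.range (n + 1), (n.choose j : ℚ) * (k : ℚ) ^ (n - j) * (bellNum j : ℚ) =
      ∑ m ∈ Finset.range (k + 1), stirling1 k m * (bellNum (n + m) : ℚ) := by
  have hL : bellL ((X + (k:ℚ[X]))^n)
      = ∑ j ∈ Finset.range (n+1), (n.choose j : ℚ) * (k:ℚ)^(n-j) * (bellNum j : ℚ) := by
    rw [add_pow, map_sum]
    refine Finset.sum_congr rfl fun j _ => ?_
    have e : (X:ℚ[X])^j * (k:ℚ[X])^(n-j) * (n.choose j : ℚ[X])
        = ((n.choose j : ℚ) * (k:ℚ)^(n-j)) • X^j := by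
      rw [smul_eq_C_mul, map_mul, map_pow, C_eq_natCast, C_eq_natCast]; ring
    rw [e, map_smul, bellL_X_pow, smul_eq_mul]
  have hcomp : ((X:ℚ[X])^n).comp (X + (k:ℚ[X])) = (X + (k:ℚ[X]))^n := X_pow_comp
  have hR : bellL (descPochhammer ℚ k * X^n)
      = ∑ m ∈ Finset.range (k+1), stirling1 k m * (bellNum (n+m) : ℚ) := by
    have hd : descPochhammer ℚ k
        = ∑ m ∈ Finset.range (k+1), C ((descPochhammer ℚ k).coeff m) * X^m := by
      conv_lhs => rw [(descPochhammer ℚ k).as_sum_range' (k+1)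
        (by rw [descPochhammer_natDegree]; omega)]
      exact Finset.sum_congr rfl fun m _ => (C_mul_X_pow_eq_monomial).symm
    rw [hd, Finset.sum_mul, map_sum]
    refine Finset.sum_congr rfl fun m _ => ?_
    have e : C ((descPochhammer ℚ k).coeff m) * X^m * (X:ℚ[X])^n
        = ((descPochhammer ℚ k).coeff m) • X^(n+m) := by
      rw [smul_eq_C_mul, mul_assoc, ← pow_add, Nat.add_comm m n]
    rw [e, map_smul, bellL_X_pow, smul_eq_mul]
    rfl
  rw [← hL, ← hcomp, bellL_comp k (X^n), hR]
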